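/- arXiv:2207.03285 — 3 statements merged into one kernel-verified Lean document; each statement's English description precedes it below -/
import Mathlib

section
/- Let F be a totally real number field of degree g and let k : I → ℕ be a function on the set I of real embeddings of F. Then ∏_{τ ∈ I} τ(ε)^{k(τ)} = 1 holds for every totally positive unit ε of 𝓞_F if and only if k is constant, i.e. all the values k(τ) for τ ∈ I are equal. -/
open NumberField

lemma isReal_ofRealHom_comp {F : Type} [Field F] (τ : F →+* ℝ) :
    ComplexEmbedding.IsReal (Complex.ofRealHom.comp τ) := by
  rw [ComplexEmbedding.isReal_iff]
  ext x
  simp [Complex.conj_ofReal]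

noncomputable def realEmbEquiv (F : Type) [Field F] [NumberField F] :
    (F →+* ℝ) ≃ {φ : F →+* ℂ // ComplexEmbedding.IsReal φ} where
  toFun τ := ⟨Complex.ofRealHom.comp τ, isReal_ofRealHom_comp τ⟩
  invFun φ := φ.2.embedding
  left_inv τ := by
    ext x
    have := (isReal_ofRealHom_comp τ).coe_embedding_apply x
    simp only [RingHom.coe_comp, Function.comp_apply, Complex.ofRealHom_eq_coe] at this
    exact_mod_cast this
  right_inv φ := by
    refine Subtype.ext ?_
    ext x
    exact φ.2.coe_embedding_apply x

/-- Let `F` be a totally real number field of degree `g` (totally real: the number of real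
embeddings equals the degree) and `k : I → ℕ` a function on the set `I` of real embeddings
of `F`. Then `∏_{τ ∈ I} τ(ε) ^ k(τ) = 1` for every totally positive unit `ε` of `𝓞 F`
if and only if `k` is constant. -/
theorem prod_emb_unit_pow_eq_one_iff_constant (F : Type) [Field F] [NumberField F]
    (htotreal : Fintype.card (F →+* ℝ) = Module.finrank ℚ F)
    (k : (F →+* ℝ) → ℕ) :
    (∀ ε : (𝓞 F)ˣ, (∀ τ : F →+* ℝ, 0 < τ ((ε : 𝓞 F) : F)) →
        ∏ τ : F →+* ℝ, (τ ((ε : 𝓞 F) : F)) ^ (k τ) = 1) ↔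
      ∀ τ τ' : F →+* ℝ, k τ = k τ' := by
  classical
  have hcard_real : Fintype.card (F →+* ℝ) = InfinitePlace.nrRealPlaces F := by
    rw [← InfinitePlace.card_real_embeddings]
    exact Fintype.card_congr (realEmbEquiv F)
  have hcomplex : InfinitePlace.nrComplexPlaces F = 0 := by
    have h2 := InfinitePlace.card_add_two_mul_card_eq_rank F
    omega
  have hallreal : ∀ w : InfinitePlace F, w.IsReal := by
    intro w
    by_contra h
    rw [InfinitePlace.not_isReal_iff_isComplex] at h
    exact (Fintype.card_eq_zero_iff.mp hcomplex).elim ⟨w, h⟩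
  have hmult : ∀ w : InfinitePlace F, w.mult = 1 := fun w => by
    simp [InfinitePlace.mult, hallreal w]
  set E : (F →+* ℝ) → InfinitePlace F :=
    fun τ => InfinitePlace.mk (Complex.ofRealHom.comp τ) with hE
  have hEapp : ∀ (τ : F →+* ℝ) (x : F), E τ x = |τ x| := fun τ x => by
    simp [hE, InfinitePlace.apply, Complex.norm_real, Real.norm_eq_abs]
  have hEinj : Function.Injective E := by
    intro τ τ' h
    rcases InfinitePlace.mk_eq_iff.mp h with h | h
    · ext x; exact Complex.ofReal_injective (RingHom.congr_fun h x)
    · rw [ComplexEmbedding.isReal_iff.mp (isReal_ofRealHom_comp τ)] at h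
      ext x; exact Complex.ofReal_injective (RingHom.congr_fun h x)
  have hcardE : Fintype.card (F →+* ℝ) = Fintype.card (InfinitePlace F) := by
    rw [InfinitePlace.card_eq_nrRealPlaces_add_nrComplexPlaces, hcomplex, add_zero, hcard_real]
  have hEbij : Function.Bijective E :=
    (Fintype.bijective_iff_injective_and_card E).mpr ⟨hEinj, hcardE⟩
  set e : (F →+* ℝ) ≃ InfinitePlace F := Equiv.ofBijective E hEbij with he
  have hprod1 : ∀ u : (𝓞 F)ˣ, ∏ w : InfinitePlace F, w ((u : 𝓞 F) : F) = 1 := by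
    intro u
    have h := InfinitePlace.prod_eq_abs_norm ((u : 𝓞 F) : F)
    rw [Units.norm, Rat.cast_one] at h
    simpa [hmult] using h
  have hwpos : ∀ (u : (𝓞 F)ˣ) (w : InfinitePlace F), 0 < w ((u : 𝓞 F) : F) :=
    fun u w => InfinitePlace.pos_iff.mpr (Units.coe_ne_zero u)
  have hsumlog : ∀ u : (𝓞 F)ˣ, ∑ w : InfinitePlace F, Real.log (w ((u : 𝓞 F) : F)) = 0 := by
    intro u
    have h := congrArg Real.log (hprod1 u)
    rwa [Real.log_prod (fun w _ => ne_of_gt (hwpos u w)), Real.log_one] at h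
  constructor
  · -- hard direction
    intro H τ τ'
    set κ : InfinitePlace F → ℕ := fun w => k (e.symm w) with hκdef
    have hκ : ∀ σ : F →+* ℝ, κ (E σ) = k σ := fun σ => by
      simp only [hκdef]
      congr 1
      exact e.symm_apply_apply σ
    set w₀ : InfinitePlace F := Units.dirichletUnitTheorem.w₀ with hw₀def
    suffices hconst : ∀ w : InfinitePlace F, κ w = κ w₀ by
      rw [← hκ τ, ← hκ τ', hconst (E τ), hconst (E τ')]
    -- key vanishing sum
    have key : ∀ u : (𝓞 F)ˣ,
        ∑ w : InfinitePlace F, (κ w : ℝ) * Real.log (w ((u : 𝓞 F) : F)) = 0 := by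
      intro u
      have hpos2 : ∀ σ : F →+* ℝ, 0 < σ (((u ^ 2 : (𝓞 F)ˣ) : 𝓞 F) : F) := by
        intro σ
        have hc : (((u ^ 2 : (𝓞 F)ˣ) : 𝓞 F) : F) = (((u : 𝓞 F) : F)) ^ 2 := by push_cast; ring
        rw [hc, map_pow]
        have hne : σ ((u : 𝓞 F) : F) ≠ 0 := (map_ne_zero σ).mpr (Units.coe_ne_zero u)
        positivity
      have h1 := H (u ^ 2) hpos2
      have hcoe : (((u ^ 2 : (𝓞 F)ˣ) : 𝓞 F) : F) = (((u : 𝓞 F) : F)) ^ 2 := by push_cast; ring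
      rw [hcoe] at h1
      have h2 : ∏ σ : F →+* ℝ, (E σ ((u : 𝓞 F) : F)) ^ (2 * k σ) = 1 := by
        rw [← h1]
        refine Finset.prod_congr rfl fun σ _ => ?_
        rw [hEapp, map_pow, pow_mul, sq_abs]
      have hlog := congrArg Real.log h2
      rw [Real.log_prod (fun σ _ =>
            pow_ne_zero _ (ne_of_gt (hEapp σ _ ▸ (hwpos u (E σ))))), Real.log_one] at hlog
      simp_rw [Real.log_pow, Nat.cast_mul, Nat.cast_ofNat, mul_assoc] at hlog
      rw [← Finset.mul_sum] at hlog
      have h3 : ∑ σ : F →+* ℝ, (k σ : ℝ) * Real.log (E σ ((u : 𝓞 F) : F)) = 0 := by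
        linarith
      calc ∑ w : InfinitePlace F, (κ w : ℝ) * Real.log (w ((u : 𝓞 F) : F))
          = ∑ σ : F →+* ℝ, (κ (e σ) : ℝ) * Real.log ((e σ) ((u : 𝓞 F) : F)) :=
            (Equiv.sum_comp e _).symm
        _ = ∑ σ : F →+* ℝ, (k σ : ℝ) * Real.log (E σ ((u : 𝓞 F) : F)) :=
            Finset.sum_congr rfl fun σ _ => by rw [show e σ = E σ from rfl, hκ]
        _ = 0 := h3
    -- linear functional vanishing on the unit lattice
    let f : ({w : InfinitePlace F // w ≠ w₀} → ℝ) →ₗ[ℝ] ℝ :=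
      { toFun := fun x => ∑ w, ((κ w.1 : ℝ) - (κ w₀ : ℝ)) * x w
        map_add' := fun x y => by
          simp [mul_add, Finset.sum_add_distrib]
        map_smul' := fun c x => by
          simp only [Pi.smul_apply, smul_eq_mul, RingHom.id_apply, Finset.mul_sum]
          exact Finset.sum_congr rfl fun w _ => by ring }
    have hf0 : f = 0 := by
      apply LinearMap.ext_on (Units.dirichletUnitTheorem.unitLattice_span_eq_top F)
      rintro x ⟨u, -, rfl⟩
      have hcomp : ∀ w : {w : InfinitePlace F // w ≠ w₀},
          (Units.logEmbedding F u) w = Real.log (w.1 ((u.toMul : 𝓞 F) : F)) := by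
        intro w
        have := Units.dirichletUnitTheorem.logEmbedding_component (K := F) u.toMul w
        rw [hmult] at this
        simpa using this
      show ∑ w : {w : InfinitePlace F // w ≠ w₀},
          ((κ w.1 : ℝ) - (κ w₀ : ℝ)) * ((Units.logEmbedding F) u) w = 0
      simp_rw [hcomp]
      rw [← Finset.sum_subtype (Finset.univ.erase w₀)
          (p := fun w => w ≠ w₀)
          (fun w => ⟨fun h => Finset.ne_of_mem_erase h,
            fun h => Finset.mem_erase_of_ne_of_mem h (Finset.mem_univ w)⟩)
          (fun w => ((κ w : ℝ) - (κ w₀ : ℝ)) * Real.log (w ((u.toMul : 𝓞 F) : F)))]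
      rw [Finset.sum_erase_eq_sub (Finset.mem_univ w₀)]
      simp_rw [sub_mul]
      rw [Finset.sum_sub_distrib, ← Finset.mul_sum, key u.toMul, hsumlog u.toMul]
      ring
    intro w
    by_cases hw : w = w₀
    · rw [hw]
    · have h5 := LinearMap.congr_fun hf0 (Pi.single ⟨w, hw⟩ (1 : ℝ))
      simp only [LinearMap.zero_apply, LinearMap.coe_mk, AddHom.coe_mk, f] at h5
      rw [Finset.sum_eq_single (⟨w, hw⟩ : {w : InfinitePlace F // w ≠ w₀})
          (fun b _ hb => by rw [Pi.single_apply, if_neg hb, mul_zero])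
          (fun h => absurd (Finset.mem_univ _) h)] at h5
      rw [Pi.single_apply, if_pos rfl, mul_one, sub_eq_zero] at h5
      exact_mod_cast h5
  · -- easy direction
    intro hk ε hpos
    rcases isEmpty_or_nonempty (F →+* ℝ) with hempty | hne
    · simp
    obtain ⟨τ₀⟩ := hne
    have h2 : ∏ σ : F →+* ℝ, σ ((ε : 𝓞 F) : F) = 1 := by
      have h := hprod1 ε
      rw [← Fintype.prod_bijective E hEbij _ _ (fun σ => rfl)] at h
      calc ∏ σ : F →+* ℝ, σ ((ε : 𝓞 F) : F)
          = ∏ σ : F →+* ℝ, E σ ((ε : 𝓞 F) : F) := by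
            refine Finset.prod_congr rfl fun σ _ => ?_
            rw [hEapp, abs_of_pos (hpos σ)]
        _ = 1 := h
    calc ∏ σ : F →+* ℝ, (σ ((ε : 𝓞 F) : F)) ^ (k σ)
        = ∏ σ : F →+* ℝ, (σ ((ε : 𝓞 F) : F)) ^ (k τ₀) :=
          Finset.prod_congr rfl fun σ _ => by rw [hk σ τ₀]
      _ = (∏ σ : F →+* ℝ, σ ((ε : 𝓞 F) : F)) ^ (k τ₀) := by rw [Finset.prod_pow]
      _ = 1 := by rw [h2, one_pow]
end

section
/- Let F be a totally real number field, 𝔞 a nonzero fractional ideal of F, and 𝔭 a nonzero prime ideal of 𝓞_F. Let ξ be a torsion character of the fractional ideal 𝔭𝔞 with (finite) Δ-orbit O, and let α ∈ 𝔞. Let S be the set of torsion characters ζ of 𝔞 whose restriction to 𝔭𝔞 belongs to O. Then S is finite, and (1/N𝔭) · Σ_{ζ ∈ S} ζ(α) equals ξΔ(α) = Σ_{η ∈ O} η(α) if α ∈ 𝔭𝔞, and equals 0 if α ∉ 𝔭𝔞; here N𝔭 denotes the absolute norm of 𝔭. (This is the orbit-summed form of the lemma '(1/N𝔭) Σ_{ζΔ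 ↦ ξΔ} ζΔ(α) = ξΔ(α) or 0', since Σ_{ζΔ ↦ ξΔ} ζΔ(α) = Σ_{ζ ∈ S} ζ(α).) -/
open NumberField
open scoped nonZeroDivisors

/-- The group `Δ` of totally positive units of the ring of integers of `F`. -/
def totPosUnits (F : Type) [Field F] [NumberField F] : Subgroup (𝓞 F)ˣ where
  carrier := {ε | ∀ τ : F →+* ℝ, 0 < τ ((ε : 𝓞 F) : F)}
  one_mem' := by intro τ; simp
  mul_mem' := by
    intro a b ha hb τ
    have := mul_pos (ha τ) (hb τ)
    simpa [map_mul] using this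
  inv_mem' := by
    intro a ha τ
    have h := ha τ
    have h2 : (((a⁻¹ : (𝓞 F)ˣ) : 𝓞 F) : F) * (((a : (𝓞 F)ˣ) : 𝓞 F) : F) = 1 := by
      have := congrArg (fun x : 𝓞 F => (x : F)) (Units.inv_mul a)
      simpa using this
    rw [eq_inv_of_mul_eq_one_left h2, map_inv₀]
    exact inv_pos.2 h

/-- The fractional ideals of a number field `F`. -/
abbrev FracIdl (F : Type) [Field F] [NumberField F] : Type :=
  FractionalIdeal (𝓞 F)⁰ F

/-- A character of the additive group of a fractional ideal `𝔞`, with values in `ℂ`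
(equivalently, a group homomorphism from the additive group `𝔞` to `ℂˣ`). -/
abbrev IdealChar (F : Type) [Field F] [NumberField F] (𝔞 : FracIdl F) : Type :=
  AddChar ↥(𝔞 : Submodule (𝓞 F) F) ℂ

variable {F : Type} [Field F] [NumberField F]

/-- A character `ζ` of `𝔞` has level `𝔤` if `ζ` is trivial on `𝔤𝔞`. -/
def HasLevel {𝔞 : FracIdl F} (ζ : IdealChar F 𝔞) (𝔤 : Ideal (𝓞 F)) : Prop :=
  ∀ (x : F) (hx : x ∈ (𝔞 : Submodule (𝓞 F) F)),
    x ∈ (𝔤 : FracIdl F) * 𝔞 → ζ ⟨x, hx⟩ = 1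

/-- A torsion character of `𝔞` is a character of finite order, equivalently one whose
kernel contains `𝔤𝔞` for some nonzero integral ideal `𝔤`. -/
def IsTorsionChar {𝔞 : FracIdl F} (ζ : IdealChar F 𝔞) : Prop :=
  ∃ 𝔤 : Ideal (𝓞 F), 𝔤 ≠ 0 ∧ HasLevel ζ 𝔤

/-- A character of `𝔞` is primitive of level `𝔤` if it has level `𝔤` but does not have
level `𝔤'` for any integral ideal `𝔤'` strictly containing `𝔤`. -/
def IsPrimitiveChar {𝔞 : FracIdl F} (ζ : IdealChar F 𝔞) (𝔤 : Ideal (𝓞 F)) : Prop :=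
  HasLevel ζ 𝔤 ∧ ∀ 𝔤' : Ideal (𝓞 F), 𝔤 < 𝔤' → ¬ HasLevel ζ 𝔤'

lemma coeIdeal_mul_le (𝔤 : Ideal (𝓞 F)) (𝔞 : FracIdl F) :
    (𝔤 : FracIdl F) * 𝔞 ≤ 𝔞 := by
  rw [FractionalIdeal.mul_le]
  intro i hi j hj
  rw [FractionalIdeal.mem_coeIdeal] at hi
  obtain ⟨a, -, rfl⟩ := hi
  rw [← Algebra.smul_def]
  exact FractionalIdeal.mem_coe.1
    (Submodule.smul_mem _ a (FractionalIdeal.mem_coe.2 hj))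

/-- Restriction of a character of `𝔞` to the subideal `𝔭𝔞`. -/
def restrictChar {𝔞 : FracIdl F} (𝔭 : Ideal (𝓞 F)) (ζ : IdealChar F 𝔞) :
    IdealChar F ((𝔭 : FracIdl F) * 𝔞) :=
  ζ.compAddMonoidHom
    (Submodule.inclusion (FractionalIdeal.coe_le_coe.2 (coeIdeal_mul_le 𝔭 𝔞))).toAddMonoidHom

/-- Multiplication by the unit `ε` as an additive endomorphism of (the additive group of)
the fractional ideal `𝔞`. -/
def unitScaleHom {𝔞 : FracIdl F} (ε : (𝓞 F)ˣ) :
    ↥(𝔞 : Submodule (𝓞 F) F) →+ ↥(𝔞 : Submodule (𝓞 F) F) where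
  toFun a := ⟨(ε : 𝓞 F) • (a : F), Submodule.smul_mem _ _ a.2⟩
  map_zero' := by ext; simp
  map_add' a b := by ext; simp [smul_add]

/-- The action of a unit `ε` on characters of `𝔞`: `(ε · ζ)(α) = ζ(εα)`. -/
def charSmul {𝔞 : FracIdl F} (ε : (𝓞 F)ˣ) (ζ : IdealChar F 𝔞) : IdealChar F 𝔞 :=
  ζ.compAddMonoidHom (unitScaleHom ε)

/-- The `Δ`-orbit of a character `ξ` of `𝔞` under the totally positive units. -/
def charOrbit {𝔞 : FracIdl F} (ξ : IdealChar F 𝔞) : Set (IdealChar F 𝔞) :=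
  {ζ | ∃ ε ∈ totPosUnits F, ζ = charSmul ε ξ}

/-- `ξΔ(α) := Σ_{η ∈ Δ-orbit of ξ} η(α)` (a finite sum, the orbit of a torsion character
being finite). -/
noncomputable def orbitSum {𝔞 : FracIdl F} (ξ : IdealChar F 𝔞)
    (a : ↥(𝔞 : Submodule (𝓞 F) F)) : ℂ :=
  ∑ᶠ η ∈ charOrbit ξ, η a

/-- Totally positive elements of `F`. -/
def IsTotPos (x : F) : Prop := ∀ τ : F →+* ℝ, 0 < τ x

/-- The set `𝔞₊` of totally positive elements of the fractional ideal `𝔞`. -/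
abbrev posElts (𝔞 : FracIdl F) : Type :=
  {x : F // x ∈ (𝔞 : Submodule (𝓞 F) F) ∧ IsTotPos x}

/-- The equivalence relation on `𝔞₊` identifying elements in the same orbit under
multiplication by totally positive units. -/
def deltaSetoid (𝔞 : FracIdl F) : Setoid (posElts 𝔞) where
  r x y := ∃ ε ∈ totPosUnits F, (y : F) = (((ε : 𝓞 F) : F)) * (x : F)
  iseqv := by
    constructor
    · intro x
      exact ⟨1, one_mem _, by simp⟩
    · rintro x y ⟨ε, hε, hxy⟩
      refine ⟨ε⁻¹, inv_mem hε, ?_⟩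
      rw [hxy, ← mul_assoc]
      have h2 : (((ε⁻¹ : (𝓞 F)ˣ) : 𝓞 F) : F) * (((ε : (𝓞 F)ˣ) : 𝓞 F) : F) = 1 := by
        have := congrArg (fun t : 𝓞 F => (t : F)) (Units.inv_mul ε)
        simpa using this
      rw [h2, one_mul]
    · rintro x y z ⟨ε, hε, hxy⟩ ⟨η, hη, hyz⟩
      refine ⟨η * ε, mul_mem hη hε, ?_⟩
      rw [hyz, hxy, ← mul_assoc]
      congr 1

/-- The Lerch zeta function `ℒ(ξΔ, s) = Σ_{[α] ∈ Δ\𝔞₊} ξΔ(α) · N(𝔞⁻¹α)^{−s}`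
attached to a (torsion) character `ξ` of `𝔞`; here the summand is evaluated at the
chosen representative of each orbit `[α]` (it does not depend on this choice), and
`N(𝔞⁻¹α)` is the absolute norm of the fractional ideal `α𝔞⁻¹`. -/
noncomputable def lerchZeta (𝔞 : FracIdl F) (ξ : IdealChar F 𝔞) (s : ℂ) : ℂ :=
  ∑' q : Quotient (deltaSetoid 𝔞),
    orbitSum ξ ⟨(q.out : F), q.out.2.1⟩ *
      ((FractionalIdeal.absNorm
          (FractionalIdeal.spanSingleton (𝓞 F)⁰ (q.out : F) * 𝔞⁻¹) : ℚ) : ℂ) ^ (-s)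


noncomputable instance : DivisibleBy (Additive ℂˣ) ℤ where
  div a n := if h : n = 0 then 0 else
    Additive.ofMul (Units.mk0 (Complex.exp (Complex.log ((a.toMul : ℂˣ) : ℂ) / n))
      (Complex.exp_ne_zero _))
  div_zero a := by simp
  div_cancel {n} a hn := by
    simp only [dif_neg hn]
    apply Additive.toMul.injective
    rw [toMul_zsmul, toMul_ofMul]
    ext
    rw [Units.val_zpow_eq_zpow_val, Units.val_mk0, ← Complex.exp_int_mul,
      show ((n : ℂ)) * (Complex.log ((a.toMul : ℂˣ) : ℂ) / n) = Complex.log ((a.toMul : ℂˣ) : ℂ) by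
        rw [mul_comm]; exact div_mul_cancel₀ _ (by exact_mod_cast hn),
      Complex.exp_log (Units.ne_zero _)]

section AbstractChar

variable {M N Q : Type} [AddCommGroup M] [AddCommGroup N] [AddCommGroup Q]

/-- The equivalence between `ℂ`-valued and `ℂˣ`-valued additive characters. -/
noncomputable def addCharUnits (A : Type) [AddCommGroup A] :
    AddChar A ℂ ≃ (A →+ Additive ℂˣ) where
  toFun ψ :=
    { toFun := fun a => Additive.ofMul (ψ.toMonoidHom.toHomUnits (Multiplicative.ofAdd a))
      map_zero' := by
        apply Additive.toMul.injective
        simp only [toMul_ofMul]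
        ext
        simp
      map_add' := fun a b => by
        apply Additive.toMul.injective
        simp only [toMul_ofMul, toMul_add]
        ext
        simp [AddChar.map_add_eq_mul] }
  invFun φ :=
    { toFun := fun a => (((φ a).toMul : ℂˣ) : ℂ)
      map_zero_eq_one' := by simp
      map_add_eq_mul' := fun a b => by simp }
  left_inv ψ := by ext a; rfl
  right_inv φ := by
    ext a
    apply Additive.toMul.injective
    exact rfl

lemma addCharUnits_apply_val {A : Type} [AddCommGroup A] (ψ : AddChar A ℂ) (a : A) :
    (((addCharUnits A ψ a).toMul : ℂˣ) : ℂ) = ψ a := rfl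

lemma addCharUnits_symm_apply {A : Type} [AddCommGroup A] (φ : A →+ Additive ℂˣ) (a : A) :
    (addCharUnits A).symm φ a = (((φ a).toMul : ℂˣ) : ℂ) := rfl

/-- Extension of `ℂ`-valued characters along an injective map of abelian groups. -/
lemma exists_addChar_extension (i : N →+ M) (hi : Function.Injective i) (η : AddChar N ℂ) :
    ∃ ζ : AddChar M ℂ, ζ.compAddMonoidHom i = η := by
  obtain ⟨h, hh⟩ := (Module.Baer.of_divisible (Additive ℂˣ)).extension_property_addMonoidHom
    i hi (addCharUnits N η)
  refine ⟨(addCharUnits M).symm h, ?_⟩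
  ext n
  have h1 : h (i n) = addCharUnits N η n := DFunLike.congr_fun hh n
  show (addCharUnits M).symm h (i n) = η n
  rw [addCharUnits_symm_apply, h1, addCharUnits_apply_val]

/-- Descend a hom along a surjection whose kernel it kills. -/
lemma exists_descend {A' : Type} [AddCommGroup A'] (π : M →+ Q) (hπ : Function.Surjective π)
    (ψ : M →+ A') (h0 : ∀ m, π m = 0 → ψ m = 0) : ∃ χ : Q →+ A', χ.comp π = ψ := by
  have key : ∀ m m', π m = π m' → ψ m = ψ m' := by
    intro m m' h
    have := h0 (m - m') (by rw [map_sub, h, sub_self])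
    rw [map_sub, sub_eq_zero] at this
    exact this
  refine ⟨{ toFun := fun q => ψ (Function.surjInv hπ q)
            map_zero' := h0 _ (Function.surjInv_eq hπ 0)
            map_add' := fun q1 q2 => by
              show ψ _ = ψ _ + ψ _
              rw [key (Function.surjInv hπ (q1 + q2))
                (Function.surjInv hπ q1 + Function.surjInv hπ q2)
                (by simp [Function.surjInv_eq hπ]),
                map_add] }, ?_⟩
  ext m
  exact key _ m (Function.surjInv_eq hπ (π m))

end AbstractChar

section Duality

variable {Q : Type} [AddCommGroup Q] [Finite Q]

/-- Monoid homs to `ℂ` from a group are the same as homs to `ℂˣ`. -/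
def monoidHomUnitsEquiv (G : Type) [Group G] : (G →* ℂˣ) ≃ (G →* ℂ) where
  toFun g := (Units.coeHom ℂ).comp g
  invFun f := f.toHomUnits
  left_inv g := by ext x; rfl
  right_inv f := by ext x; rfl

lemma hasEnough (Q : Type) [AddCommGroup Q] [Finite Q] :
    HasEnoughRootsOfUnity ℂ (Monoid.exponent (Multiplicative Q)) := by
  have hne : Monoid.exponent (Multiplicative Q) ≠ 0 := Monoid.exponent_ne_zero_of_finite
  have : NeZero ((Monoid.exponent (Multiplicative Q) : ℂ)) := ⟨by exact_mod_cast hne⟩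
  infer_instance

lemma addChar_equiv (Q : Type) [AddCommGroup Q] [Finite Q] :
    Nonempty (AddChar Q ℂ ≃ Q) := by
  have := hasEnough Q
  obtain ⟨e⟩ := CommGroup.monoidHom_mulEquiv_of_hasEnoughRootsOfUnity (Multiplicative Q) ℂ
  exact ⟨AddChar.toMonoidHomEquiv.trans <| (monoidHomUnitsEquiv (Multiplicative Q)).symm.trans <|
    e.toEquiv.trans (MulEquiv.refl _).toEquiv⟩

lemma addChar_finite (Q : Type) [AddCommGroup Q] [Finite Q] : Finite (AddChar Q ℂ) := by
  obtain ⟨e⟩ := addChar_equiv Q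
  exact Finite.of_equiv Q e.symm

lemma exists_addChar_ne_one {q : Q} (hq : q ≠ 0) : ∃ χ : AddChar Q ℂ, χ q ≠ 1 := by
  have := hasEnough Q
  obtain ⟨φ, hφ⟩ := CommGroup.exists_apply_ne_one_of_hasEnoughRootsOfUnity (Multiplicative Q) ℂ
    (a := Multiplicative.ofAdd q) (by simpa using hq)
  refine ⟨AddChar.toMonoidHomEquiv.symm ((Units.coeHom ℂ).comp φ), fun h => hφ ?_⟩
  ext
  simpa using h

open scoped Classical in
lemma sum_addChar [Fintype (AddChar Q ℂ)] (q : Q) :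
    ∑ χ : AddChar Q ℂ, χ q = if q = 0 then (Nat.card Q : ℂ) else 0 := by
  split_ifs with h
  · subst h
    simp only [AddChar.map_zero_eq_one]
    rw [Finset.sum_const, Finset.card_univ, nsmul_eq_mul, mul_one]
    have : Nat.card (AddChar Q ℂ) = Nat.card Q := Nat.card_congr (addChar_equiv Q).some
    rw [← this, Nat.card_eq_fintype_card]
  · obtain ⟨χ₀, hχ₀⟩ := exists_addChar_ne_one h
    have key : χ₀ q * ∑ χ : AddChar Q ℂ, χ q = ∑ χ : AddChar Q ℂ, χ q := by
      rw [Finset.mul_sum]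
      exact Fintype.sum_bijective (χ₀ * ·) (Group.mulLeft_bijective χ₀) _ _
        (fun χ => (AddChar.mul_apply χ₀ χ q).symm)
    have h2 : (χ₀ q - 1) * ∑ χ : AddChar Q ℂ, χ q = 0 := by
      rw [sub_mul, one_mul, key, sub_self]
    rcases mul_eq_zero.1 h2 with h1 | h1
    · exact absurd (by linear_combination h1) hχ₀
    · exact h1

end Duality

section FiberLemma

variable {M N Q : Type} [AddCommGroup M] [AddCommGroup N] [AddCommGroup Q]

lemma char_fiber (i : N →+ M) (hi : Function.Injective i)
    (π : M →+ Q) (hπ : Function.Surjective π) [Finite Q]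
    (hker : ∀ m, π m = 0 ↔ m ∈ i.range) (η : AddChar N ℂ) :
    ∃ hE : {ζ : AddChar M ℂ | ζ.compAddMonoidHom i = η}.Finite,
      (∀ n : N, ∑ ζ ∈ hE.toFinset, ζ (i n) = (Nat.card Q : ℂ) * η n) ∧
      (∀ m : M, m ∉ i.range → ∑ ζ ∈ hE.toFinset, ζ m = 0) := by
  classical
  have hfinQ : Finite (AddChar Q ℂ) := addChar_finite Q
  have : Fintype (AddChar Q ℂ) := Fintype.ofFinite _
  obtain ⟨ζ₀, hζ₀⟩ := exists_addChar_extension i hi η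
  have hζ₀' : ∀ n, ζ₀ (i n) = η n := fun n => DFunLike.congr_fun hζ₀ n
  set E := {ζ : AddChar M ℂ | ζ.compAddMonoidHom i = η} with hE_def
  set e : AddChar Q ℂ → AddChar M ℂ := fun χ => ζ₀ * χ.compAddMonoidHom π with he_def
  have he_mem : ∀ χ, e χ ∈ E := by
    intro χ
    ext n
    show (ζ₀ * χ.compAddMonoidHom π) (i n) = η n
    rw [AddChar.mul_apply, AddChar.compAddMonoidHom_apply,
      (hker (i n)).2 ⟨n, rfl⟩, AddChar.map_zero_eq_one, mul_one, hζ₀']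
  have he_inj : Function.Injective e := by
    intro χ χ' h
    exact AddChar.compAddMonoidHom_injective_left π hπ (mul_left_cancel h)
  have he_surj : ∀ ζ ∈ E, ∃ χ, e χ = ζ := by
    intro ζ hζ
    have hζ' : ∀ n, ζ (i n) = η n := fun n => DFunLike.congr_fun hζ n
    set ψ : AddChar M ℂ := ζ * ζ₀⁻¹ with hψ_def
    have hψ0 : ∀ m, π m = 0 → addCharUnits M ψ m = 0 := by
      intro m hm
      obtain ⟨n, rfl⟩ := (hker m).1 hm
      have h1 : ψ (i n) = 1 := by
        rw [hψ_def, AddChar.mul_apply, AddChar.inv_apply', hζ', hζ₀']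
        exact mul_inv_cancel₀ ((η.val_isUnit n).ne_zero)
      apply Additive.toMul.injective
      apply Units.ext
      show (((addCharUnits M ψ (i n)).toMul : ℂˣ) : ℂ) = _
      rw [addCharUnits_apply_val, h1]
      rfl
    obtain ⟨χ', hχ'⟩ := exists_descend π hπ (addCharUnits M ψ) hψ0
    refine ⟨(addCharUnits Q).symm χ', ?_⟩
    ext m
    have h2 : (((χ' (π m)).toMul : ℂˣ) : ℂ) = ψ m := by
      rw [show χ' (π m) = addCharUnits M ψ m from DFunLike.congr_fun hχ' m,
        addCharUnits_apply_val]
    show ζ₀ m * ((addCharUnits Q).symm χ') (π m) = ζ m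
    rw [addCharUnits_symm_apply, h2, hψ_def, AddChar.mul_apply, AddChar.inv_apply']
    have h3 : ζ₀ m ≠ 0 := (ζ₀.val_isUnit m).ne_zero
    field_simp
  have hEeq : E = Set.range e := by
    ext ζ
    exact ⟨fun hζ => he_surj ζ hζ, fun ⟨χ, h⟩ => h ▸ he_mem χ⟩
  have hE : E.Finite := hEeq ▸ Set.finite_range e
  have htoFinset : hE.toFinset = Finset.univ.image e := by
    ext ζ
    simp [Set.Finite.mem_toFinset, hEeq]
  have hsum : ∀ m : M, ∑ ζ ∈ hE.toFinset, ζ m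
      = ζ₀ m * (if π m = 0 then (Nat.card Q : ℂ) else 0) := by
    intro m
    rw [htoFinset, Finset.sum_image (fun x _ y _ h => he_inj h)]
    have : ∀ χ : AddChar Q ℂ, (e χ) m = ζ₀ m * χ (π m) := fun χ => rfl
    rw [Finset.sum_congr rfl (fun χ _ => this χ), ← Finset.mul_sum, sum_addChar]
  refine ⟨hE, fun n => ?_, fun m hm => ?_⟩
  · rw [hsum, if_pos ((hker (i n)).2 ⟨n, rfl⟩), hζ₀', mul_comm]
  · rw [hsum, if_neg (fun h => hm ((hker m).1 h)), mul_zero]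

end FiberLemma

set_option synthInstance.maxHeartbeats 1000000 in
set_option maxHeartbeats 2000000 in
lemma quot_equiv_of_prime (𝔞 : FracIdl F) (h𝔞 : 𝔞 ≠ 0)
    (𝔭 : Ideal (𝓞 F)) (hprime : 𝔭.IsPrime) (h𝔭 : 𝔭 ≠ ⊥) :
    Nonempty ((𝓞 F ⧸ 𝔭) ≃ₗ[𝓞 F]
      (↥(𝔞 : Submodule (𝓞 F) F) ⧸ ((((𝔭 : FracIdl F) * 𝔞 : FracIdl F) : Submodule (𝓞 F) F).comap
        (𝔞 : Submodule (𝓞 F) F).subtype))) := by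
  set A := (𝔞 : Submodule (𝓞 F) F) with hA
  set Bf := ((𝔭 : FracIdl F) * 𝔞 : FracIdl F) with hBf
  set Bs := (Bf : Submodule (𝓞 F) F) with hBs
  set B' := Bs.comap A.subtype with hB'
  have hmax : 𝔭.IsMaximal := hprime.isMaximal h𝔭
  -- there is an element of 𝔞 not in 𝔭𝔞
  have hnotle : ¬ ((𝔞 : FracIdl F) ≤ Bf) := by
    intro hle
    have h1 : (1 : FracIdl F) ≤ (𝔭 : FracIdl F) := by
      calc (1 : FracIdl F) = 𝔞⁻¹ * 𝔞 := by
            rw [mul_comm, mul_inv_cancel₀ h𝔞]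
        _ ≤ 𝔞⁻¹ * Bf := mul_right_mono (a := 𝔞⁻¹) hle
        _ = (𝔭 : FracIdl F) * (𝔞⁻¹ * 𝔞) := by rw [hBf]; ring
        _ = (𝔭 : FracIdl F) := by
            rw [mul_comm 𝔞⁻¹ 𝔞, mul_inv_cancel₀ h𝔞, mul_one]
    rw [← FractionalIdeal.coeIdeal_top] at h1
    exact hprime.ne_top (top_le_iff.1 ((FractionalIdeal.coeIdeal_le_coeIdeal F).1 h1))
  obtain ⟨x, hxA, hxB⟩ : ∃ x : F, x ∈ A ∧ x ∉ Bs := by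
    by_contra hc
    push_neg at hc
    exact hnotle fun y hy => FractionalIdeal.mem_coe.1 (hc y (FractionalIdeal.mem_coe.2 hy))
  -- the map φ : 𝓞 → A / B'
  set φ : 𝓞 F →ₗ[𝓞 F] (↥A ⧸ B') :=
    B'.mkQ.comp (LinearMap.toSpanSingleton (𝓞 F) ↥A ⟨x, hxA⟩) with hφ
  have hφ_apply : ∀ c : 𝓞 F, φ c = B'.mkQ (c • (⟨x, hxA⟩ : ↥A)) := fun c => rfl
  have hmem_smul : ∀ (c : 𝓞 F) (y : F), c ∈ 𝔭 → y ∈ A → (c : 𝓞 F) • y ∈ Bs := by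
    intro c y hc hy
    rw [Algebra.smul_def]
    exact FractionalIdeal.mem_coe.2 (FractionalIdeal.mul_mem_mul
      ((FractionalIdeal.mem_coeIdeal _).2 ⟨c, hc, rfl⟩) (FractionalIdeal.mem_coe.1 hy))
  have hker : LinearMap.ker φ = 𝔭 := by
    ext c
    simp only [LinearMap.mem_ker, hφ_apply, Submodule.Quotient.mk_eq_zero, Submodule.mkQ_apply]
    have hval : ((c • (⟨x, hxA⟩ : ↥A)) : ↥A).val = c • x := rfl
    constructor
    · intro hcB
      have hcx : c • x ∈ Bs := by
        have := (Submodule.mem_comap.1 hcB)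
        rwa [Submodule.subtype_apply, hval] at this
      by_contra hc𝔭
      obtain ⟨u, p, hp, hup⟩ := hmax.exists_inv hc𝔭
      have hx' : x ∈ Bs := by
        have : x = u • (c • x) + p • x := by
          rw [smul_smul, ← add_smul]
          have : u * c + p = 1 := hup
          rw [this, one_smul]
        rw [this]
        exact Bs.add_mem (Bs.smul_mem u hcx) (hmem_smul p x hp hxA)
      exact hxB hx'
    · intro hc
      rw [Submodule.mem_comap, Submodule.subtype_apply, hval]
      exact hmem_smul c x hc hxA
  have hsurj : Function.Surjective φ := by
    -- fractional ideal identity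
    have hxspan : FractionalIdeal.spanSingleton (𝓞 F)⁰ x ≤ 𝔞 :=
      FractionalIdeal.spanSingleton_le_iff_mem.2 (FractionalIdeal.mem_coe.1 hxA)
    have hJle : FractionalIdeal.spanSingleton (𝓞 F)⁰ x * 𝔞⁻¹ ≤ 1 := by
      calc FractionalIdeal.spanSingleton (𝓞 F)⁰ x * 𝔞⁻¹ ≤ 𝔞 * 𝔞⁻¹ :=
            mul_left_mono (a := 𝔞⁻¹) hxspan
        _ = 1 := mul_inv_cancel₀ h𝔞
    obtain ⟨J, hJ⟩ := FractionalIdeal.le_one_iff_exists_coeIdeal.1 hJle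
    have hJ𝔞 : (J : FracIdl F) * 𝔞 = FractionalIdeal.spanSingleton (𝓞 F)⁰ x := by
      rw [hJ, mul_assoc, mul_comm 𝔞⁻¹ 𝔞, mul_inv_cancel₀ h𝔞, mul_one]
    have hJP : ¬ J ≤ 𝔭 := by
      intro hle
      apply hxB
      have : FractionalIdeal.spanSingleton (𝓞 F)⁰ x ≤ Bf := by
        rw [← hJ𝔞, hBf]
        exact mul_left_mono (a := 𝔞) ((FractionalIdeal.coeIdeal_le_coeIdeal F).2 hle)
      exact FractionalIdeal.mem_coe.1
        (this (FractionalIdeal.mem_spanSingleton_self _ x))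
    have hsup : 𝔭 ⊔ J = ⊤ := hmax.1.2 _ (left_lt_sup.2 hJP)
    have hid : (𝔞 : FracIdl F) = Bf + FractionalIdeal.spanSingleton (𝓞 F)⁰ x := by
      conv_lhs => rw [← one_mul 𝔞, ← FractionalIdeal.coeIdeal_top, ← hsup,
        FractionalIdeal.coeIdeal_sup, add_mul, hJ𝔞]
    intro q
    obtain ⟨⟨y, hyA⟩, rfl⟩ := Submodule.mkQ_surjective B' q
    have hy' : y ∈ (Bf + FractionalIdeal.spanSingleton (𝓞 F)⁰ x : FracIdl F) := by
      rw [← hid]; exact FractionalIdeal.mem_coe.1 hyA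
    rw [← FractionalIdeal.mem_coe, FractionalIdeal.coe_add, Submodule.add_eq_sup] at hy'
    obtain ⟨b, hb, s, hs, hbs⟩ := Submodule.mem_sup.1 hy'
    rw [FractionalIdeal.coe_spanSingleton] at hs
    obtain ⟨c, rfl⟩ := Submodule.mem_span_singleton.1 hs
    refine ⟨c, ?_⟩
    rw [hφ_apply, Submodule.mkQ_apply, Submodule.mkQ_apply, Submodule.Quotient.eq]
    rw [Submodule.mem_comap]
    have hval : (((c • (⟨x, hxA⟩ : ↥A)) - ⟨y, hyA⟩ : ↥A)).val = c • x - y := rfl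
    rw [Submodule.subtype_apply, hval, ← hbs]
    have : c • x - (b + c • x) = -b := by ring
    rw [this]
    exact Bs.neg_mem hb
  exact ⟨(Submodule.quotEquivOfEq 𝔭 (LinearMap.ker φ) hker.symm).trans
    (φ.quotKerEquivOfSurjective hsurj)⟩


set_option synthInstance.maxHeartbeats 1000000 in
set_option maxHeartbeats 2000000 in
lemma finite_and_card_quot (𝔞 : FracIdl F) (h𝔞 : 𝔞 ≠ 0)
    (𝔭 : Ideal (𝓞 F)) (hprime : 𝔭.IsPrime) (h𝔭 : 𝔭 ≠ ⊥) :
    Finite (↥(𝔞 : Submodule (𝓞 F) F) ⧸ (Submodule.comap (𝔞 : Submodule (𝓞 F) F).subtype (((𝔭 : FracIdl F) * 𝔞 : FracIdl F) : Submodule (𝓞 F) F))) ∧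
      Nat.card (↥(𝔞 : Submodule (𝓞 F) F) ⧸ (Submodule.comap (𝔞 : Submodule (𝓞 F) F).subtype (((𝔭 : FracIdl F) * 𝔞 : FracIdl F) : Submodule (𝓞 F) F))) = Ideal.absNorm 𝔭 := by
  obtain ⟨eqv⟩ := quot_equiv_of_prime 𝔞 h𝔞 𝔭 hprime h𝔭
  have hNnz : Ideal.absNorm 𝔭 ≠ 0 := fun h => h𝔭 (Ideal.absNorm_eq_zero_iff.1 h)
  have hNfin : Finite (𝓞 F ⧸ 𝔭) := (Ideal.absNorm_ne_zero_iff 𝔭).1 hNnz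
  exact ⟨Finite.of_equiv _ eqv.toEquiv,
    by rw [← Nat.card_congr eqv.toEquiv, Ideal.absNorm_apply, Submodule.cardQuot_apply]⟩

/-- Let `F` be a totally real number field, `𝔞` a nonzero fractional ideal, `𝔭` a nonzero
prime ideal, `ξ` a torsion character of `𝔭𝔞` with finite `Δ`-orbit `O`, and `α ∈ 𝔞`.
Let `S` be the set of torsion characters `ζ` of `𝔞` whose restriction to `𝔭𝔞` lies in `O`.
Then `S` is finite, and `(1/N𝔭) · Σ_{ζ ∈ S} ζ(α)` equals `ξΔ(α) = Σ_{η ∈ O} η(α)` if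
`α ∈ 𝔭𝔞`, and equals `0` if `α ∉ 𝔭𝔞`. -/
theorem character_sum_lemma
    (htotreal : Fintype.card (F →+* ℝ) = Module.finrank ℚ F)
    (𝔞 : FracIdl F) (h𝔞 : 𝔞 ≠ 0)
    (𝔭 : Ideal (𝓞 F)) (hprime : 𝔭.IsPrime) (h𝔭 : 𝔭 ≠ ⊥)
    (ξ : IdealChar F ((𝔭 : FracIdl F) * 𝔞)) (hξ : IsTorsionChar ξ)
    (hO : (charOrbit ξ).Finite)
    (α : F) (hα : α ∈ (𝔞 : Submodule (𝓞 F) F)) :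
    ∃ hS : {ζ : IdealChar F 𝔞 | IsTorsionChar ζ ∧ restrictChar 𝔭 ζ ∈ charOrbit ξ}.Finite,
      (∀ hmem : α ∈ (((𝔭 : FracIdl F) * 𝔞 : FracIdl F) : Submodule (𝓞 F) F),
          ((Ideal.absNorm 𝔭 : ℂ))⁻¹ * ∑ ζ ∈ hS.toFinset, ζ ⟨α, hα⟩ =
            ∑ η ∈ hO.toFinset, η ⟨α, hmem⟩) ∧
      (α ∉ (((𝔭 : FracIdl F) * 𝔞 : FracIdl F) : Submodule (𝓞 F) F) →
          ((Ideal.absNorm 𝔭 : ℂ))⁻¹ * ∑ ζ ∈ hS.toFinset, ζ ⟨α, hα⟩ = 0) := by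
  classical
  have hrestrict : ∀ ζ : IdealChar F 𝔞, restrictChar 𝔭 ζ = ζ.compAddMonoidHom
      (Submodule.inclusion (FractionalIdeal.coe_le_coe.2 (coeIdeal_mul_le 𝔭 𝔞))).toAddMonoidHom :=
    fun ζ => rfl
  set incl : ↥(((𝔭 : FracIdl F) * 𝔞 : FracIdl F) : Submodule (𝓞 F) F) →+ ↥(𝔞 : Submodule (𝓞 F) F) :=
    (Submodule.inclusion (FractionalIdeal.coe_le_coe.2 (coeIdeal_mul_le 𝔭 𝔞))).toAddMonoidHom
    with hincl
  have hinclinj : Function.Injective incl := by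
    intro a b h
    apply Subtype.ext
    show (incl a).val = (incl b).val
    exact congrArg Subtype.val h
  set π : ↥(𝔞 : Submodule (𝓞 F) F) →+ (↥(𝔞 : Submodule (𝓞 F) F) ⧸ (Submodule.comap (𝔞 : Submodule (𝓞 F) F).subtype (((𝔭 : FracIdl F) * 𝔞 : FracIdl F) : Submodule (𝓞 F) F))) := (Submodule.comap (𝔞 : Submodule (𝓞 F) F).subtype (((𝔭 : FracIdl F) * 𝔞 : FracIdl F) : Submodule (𝓞 F) F)).mkQ.toAddMonoidHom with hπdef
  have hπ : Function.Surjective π := fun q => Submodule.mkQ_surjective (Submodule.comap (𝔞 : Submodule (𝓞 F) F).subtype (((𝔭 : FracIdl F) * 𝔞 : FracIdl F) : Submodule (𝓞 F) F)) q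
  have hker : ∀ m : ↥(𝔞 : Submodule (𝓞 F) F), π m = 0 ↔ m ∈ incl.range := by
    intro m
    rw [show π m = (Submodule.comap (𝔞 : Submodule (𝓞 F) F).subtype (((𝔭 : FracIdl F) * 𝔞 : FracIdl F) : Submodule (𝓞 F) F)).mkQ m from rfl, Submodule.mkQ_apply, Submodule.Quotient.mk_eq_zero]
    constructor
    · intro h
      exact ⟨⟨m.1, Submodule.mem_comap.1 h⟩, Subtype.ext rfl⟩
    · rintro ⟨n, rfl⟩
      exact Submodule.mem_comap.2 n.2
  obtain ⟨hQfin, hcardN⟩ := finite_and_card_quot 𝔞 h𝔞 𝔭 hprime h𝔭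
  have hNnz : Ideal.absNorm 𝔭 ≠ 0 := fun h => h𝔭 (Ideal.absNorm_eq_zero_iff.1 h)
  have hfib : ∀ η : AddChar ↥(((𝔭 : FracIdl F) * 𝔞 : FracIdl F) : Submodule (𝓞 F) F) ℂ,
      ∃ hE : {ζ : AddChar ↥(𝔞 : Submodule (𝓞 F) F) ℂ | ζ.compAddMonoidHom incl = η}.Finite,
        (∀ n : ↥(((𝔭 : FracIdl F) * 𝔞 : FracIdl F) : Submodule (𝓞 F) F), ∑ ζ ∈ hE.toFinset, ζ (incl n)
            = (Nat.card (↥(𝔞 : Submodule (𝓞 F) F) ⧸ (Submodule.comap (𝔞 : Submodule (𝓞 F) F).subtype (((𝔭 : FracIdl F) * 𝔞 : FracIdl F) : Submodule (𝓞 F) F))) : ℂ) * η n) ∧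
        (∀ m : ↥(𝔞 : Submodule (𝓞 F) F), m ∉ incl.range → ∑ ζ ∈ hE.toFinset, ζ m = 0) :=
    fun η => char_fiber incl hinclinj π hπ hker η
  choose hE hsum1 hsum2 using hfib
  have htor : ∀ ζ : IdealChar F 𝔞, restrictChar 𝔭 ζ ∈ charOrbit ξ → IsTorsionChar ζ := by
    rintro ζ ⟨ε, hε, hres⟩
    obtain ⟨𝔤, h𝔤0, h𝔤⟩ := hξ
    refine ⟨𝔤 * 𝔭, ?_, ?_⟩
    · rw [Ne, Submodule.zero_eq_bot, Ideal.mul_eq_bot]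
      rintro (h | h)
      · exact h𝔤0 (by rw [h]; rfl)
      · exact h𝔭 h
    · intro y hyA hy
      have h1 : y ∈ (𝔤 : FracIdl F) * ((𝔭 : FracIdl F) * 𝔞 : FracIdl F) := by
        rw [← mul_assoc, ← FractionalIdeal.coeIdeal_mul]
        exact hy
      have h2 : y ∈ (((𝔭 : FracIdl F) * 𝔞 : FracIdl F) : Submodule (𝓞 F) F) := FractionalIdeal.mem_coe.2 (coeIdeal_mul_le 𝔤 ((𝔭 : FracIdl F) * 𝔞 : FracIdl F) h1)
      have h3 : ζ ⟨y, hyA⟩ = restrictChar 𝔭 ζ ⟨y, h2⟩ := by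
        rw [hrestrict]
        show ζ _ = ζ ((Submodule.inclusion
          (FractionalIdeal.coe_le_coe.2 (coeIdeal_mul_le 𝔭 𝔞))) ⟨y, h2⟩)
        congr 1
      rw [h3, hres]
      show ξ (unitScaleHom ε ⟨y, h2⟩) = 1
      exact h𝔤 ((ε : 𝓞 F) • y) (Submodule.smul_mem _ _ h2)
        (FractionalIdeal.mem_coe.1
          (Submodule.smul_mem (((𝔤 : FracIdl F) * ((𝔭 : FracIdl F) * 𝔞 : FracIdl F) : FracIdl F) : Submodule (𝓞 F) F) _
            (FractionalIdeal.mem_coe.2 h1)))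
  have hSeq : {ζ : IdealChar F 𝔞 | IsTorsionChar ζ ∧ restrictChar 𝔭 ζ ∈ charOrbit ξ}
      = ⋃ η ∈ charOrbit ξ, {ζ : AddChar ↥(𝔞 : Submodule (𝓞 F) F) ℂ | ζ.compAddMonoidHom incl = η} := by
    ext ζ
    simp only [Set.mem_setOf_eq, Set.mem_iUnion, exists_prop]
    constructor
    · rintro ⟨ht, hmem⟩
      exact ⟨restrictChar 𝔭 ζ, hmem, (hrestrict ζ).symm⟩
    · rintro ⟨η, hη, heq⟩
      have hres : restrictChar 𝔭 ζ = η := (hrestrict ζ).trans heq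
      exact ⟨htor ζ (hres ▸ hη), hres ▸ hη⟩
  have hS : {ζ : IdealChar F 𝔞 | IsTorsionChar ζ ∧ restrictChar 𝔭 ζ ∈ charOrbit ξ}.Finite := by
    rw [hSeq]
    exact Set.Finite.biUnion hO (fun η _ => hE η)
  have hdisj : (↑hO.toFinset : Set (IdealChar F ((𝔭 : FracIdl F) * 𝔞))).PairwiseDisjoint
      (fun η => (hE η).toFinset) := by
    intro η1 _ η2 _ hne
    refine Finset.disjoint_left.2 fun ζ h1 h2 => hne ?_
    rw [Set.Finite.mem_toFinset] at h1 h2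
    exact h1 ▸ h2 ▸ rfl
  have hsplit : hS.toFinset = hO.toFinset.biUnion (fun η => (hE η).toFinset) := by
    ext ζ
    have hmem1 : ζ ∈ {ζ : IdealChar F 𝔞 | IsTorsionChar ζ ∧ restrictChar 𝔭 ζ ∈ charOrbit ξ}
        ↔ ζ ∈ ⋃ η ∈ charOrbit ξ, {ζ : AddChar ↥(𝔞 : Submodule (𝓞 F) F) ℂ | ζ.compAddMonoidHom incl = η} := by
      rw [hSeq]
    simp only [Set.Finite.mem_toFinset, Finset.mem_biUnion]
    rw [hmem1]
    simp only [Set.mem_iUnion, exists_prop, Set.mem_setOf_eq, Set.Finite.mem_toFinset]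
  have hN : ((Ideal.absNorm 𝔭 : ℂ)) ≠ 0 := Nat.cast_ne_zero.2 hNnz
  refine ⟨hS, fun hmem => ?_, fun hnot => ?_⟩
  · have hsums : ∀ η ∈ hO.toFinset,
        ∑ ζ ∈ (hE η).toFinset, ζ ⟨α, hα⟩ = (Ideal.absNorm 𝔭 : ℂ) * η ⟨α, hmem⟩ := by
      intro η _
      have h := hsum1 η ⟨α, hmem⟩
      rw [show incl ⟨α, hmem⟩ = ⟨α, hα⟩ from Subtype.ext rfl, hcardN] at h
      exact h
    rw [hsplit, Finset.sum_biUnion hdisj, Finset.sum_congr rfl hsums, ← Finset.mul_sum,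
      ← mul_assoc, inv_mul_cancel₀ hN, one_mul]
  · have hnr : (⟨α, hα⟩ : ↥(𝔞 : Submodule (𝓞 F) F)) ∉ incl.range := by
      rintro ⟨n, hn⟩
      apply hnot
      have hv : (n : F) = α := congrArg Subtype.val hn
      exact hv ▸ n.2
    rw [hsplit, Finset.sum_biUnion hdisj,
      Finset.sum_congr rfl (fun η _ => hsum2 η ⟨α, hα⟩ hnr), Finset.sum_const, smul_zero,
      mul_zero]
end

section
/- Let F be a totally real number field, 𝔞 a nonzero fractional ideal of F, 𝔤₀ a nonzero integral ideal of 𝓞_F, 𝔭 a nonzero prime ideal of 𝓞_F, and set 𝔤₁ = 𝔭𝔤₀. Let ζ be a torsion character of 𝔞 of level 𝔤₁. Then the restriction of ζ to the fractional ideal 𝔭𝔞 is primitive of level 𝔤₀ (as a torsion character of 𝔭𝔞) if and only if either (a) ζ is primitive of level 𝔤₁, or (b) 𝔭 does not divide 𝔤₀ and ζ is primitive of level 𝔤₀. Moreover the alternatives (a) and (b) are mutually exclusive, and if 𝔭 divides 𝔤₀ only alternative (a) can occur. (This is the component-wise form of the lemma identifying the inverse image of the primitive torsion points: 𝒯'[𝔤₁]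 = 𝒯₀[𝔤₁] if 𝔭 ∣ 𝔤₀, and 𝒯'[𝔤₁] = 𝒯₀[𝔤₁] ⊔ 𝒯₀[𝔤₀] if 𝔭 ∤ 𝔤₀.) -/
open NumberField
open scoped nonZeroDivisors

variable {F : Type} [Field F] [NumberField F]

section Aux

variable {𝔞 : FracIdl F}

lemma hasLevel_mono {ζ : IdealChar F 𝔞} {𝔤 𝔤' : Ideal (𝓞 F)}
    (h : 𝔤' ≤ 𝔤) (hl : HasLevel ζ 𝔤) : HasLevel ζ 𝔤' := by
  intro x hx hmem
  refine hl x hx ?_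
  refine FractionalIdeal.mul_le.2 (fun i hi j hj => FractionalIdeal.mul_mem_mul
    ((FractionalIdeal.coeIdeal_le_coeIdeal F).2 h hi) hj) hmem

lemma hasLevel_sup {ζ : IdealChar F 𝔞} {𝔤 𝔤' : Ideal (𝓞 F)}
    (h : HasLevel ζ 𝔤) (h' : HasLevel ζ 𝔤') : HasLevel ζ (𝔤 ⊔ 𝔤') := by
  intro x hx hmem
  rw [FractionalIdeal.coeIdeal_sup, add_mul, ← FractionalIdeal.mem_coe,
    FractionalIdeal.coe_add, Submodule.add_eq_sup, Submodule.mem_sup] at hmem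
  obtain ⟨y, hy, z, hz, hyz⟩ := hmem
  have hy𝔞 : y ∈ (𝔞 : Submodule (𝓞 F) F) :=
    FractionalIdeal.coe_le_coe.2 (coeIdeal_mul_le 𝔤 𝔞) hy
  have hz𝔞 : z ∈ (𝔞 : Submodule (𝓞 F) F) :=
    FractionalIdeal.coe_le_coe.2 (coeIdeal_mul_le 𝔤' 𝔞) hz
  have hsum : (⟨x, hx⟩ : ↥(𝔞 : Submodule (𝓞 F) F)) = ⟨y, hy𝔞⟩ + ⟨z, hz𝔞⟩ :=
    Subtype.ext hyz.symm
  rw [hsum, AddChar.map_add_eq_mul,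
    h y hy𝔞 (FractionalIdeal.mem_coe.1 hy), h' z hz𝔞 (FractionalIdeal.mem_coe.1 hz), one_mul]

lemma hasLevel_restrict_iff (𝔭 : Ideal (𝓞 F)) (ζ : IdealChar F 𝔞) (𝔤 : Ideal (𝓞 F)) :
    HasLevel (restrictChar 𝔭 ζ) 𝔤 ↔ HasLevel ζ (𝔭 * 𝔤) := by
  have hassoc : ∀ x : F, x ∈ ((𝔭 * 𝔤 : Ideal (𝓞 F)) : FracIdl F) * 𝔞 ↔
      x ∈ (𝔤 : FracIdl F) * ((𝔭 : FracIdl F) * 𝔞) := by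
    intro x
    rw [FractionalIdeal.coeIdeal_mul, mul_comm (𝔭 : FracIdl F) (𝔤 : FracIdl F), mul_assoc]
  constructor
  · intro h x hx hmem
    have hmem' : x ∈ (𝔤 : FracIdl F) * ((𝔭 : FracIdl F) * 𝔞) := (hassoc x).1 hmem
    have hx' : x ∈ (((𝔭 : FracIdl F) * 𝔞 : FracIdl F) : Submodule (𝓞 F) F) := by
      refine FractionalIdeal.coe_le_coe.2 (coeIdeal_mul_le 𝔤 _) ?_
      exact FractionalIdeal.mem_coe.2 hmem'
    have := h x hx' hmem'
    rw [restrictChar, AddChar.compAddMonoidHom_apply] at this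
    exact this
  · intro h x hx hmem
    have hx𝔞 : x ∈ (𝔞 : Submodule (𝓞 F) F) :=
      FractionalIdeal.coe_le_coe.2 (coeIdeal_mul_le 𝔭 𝔞) hx
    have := h x hx𝔞 ((hassoc x).2 hmem)
    rw [restrictChar, AddChar.compAddMonoidHom_apply]
    exact this

lemma exists_conductor {ζ : IdealChar F 𝔞} {𝔤₁ : Ideal (𝓞 F)}
    (hl : HasLevel ζ 𝔤₁) :
    ∃ 𝔠 : Ideal (𝓞 F), HasLevel ζ 𝔠 ∧ 𝔤₁ ≤ 𝔠 ∧ ∀ 𝔤, HasLevel ζ 𝔤 → 𝔤 ≤ 𝔠 := by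
  set S : Set (Ideal (𝓞 F)) := {𝔤 | HasLevel ζ 𝔤 ∧ 𝔤₁ ≤ 𝔤}
  have hS : S.Nonempty := ⟨𝔤₁, hl, le_rfl⟩
  obtain ⟨𝔠, h𝔠, hmax⟩ :=
    (wellFounded_gt (α := Ideal (𝓞 F))).has_min S hS
  refine ⟨𝔠, h𝔠.1, h𝔠.2, fun 𝔤 hg => ?_⟩
  have hmem : 𝔤 ⊔ 𝔠 ∈ S := ⟨hasLevel_sup hg h𝔠.1, le_trans h𝔠.2 le_sup_right⟩
  have : ¬ 𝔤 ⊔ 𝔠 > 𝔠 := hmax _ hmem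
  have h' : 𝔤 ⊔ 𝔠 = 𝔠 := by
    by_contra hne
    exact this (lt_of_le_of_ne le_sup_right fun he => hne he.symm)
  exact le_sup_left.trans h'.le

lemma isPrimitive_iff_eq_conductor {ζ : IdealChar F 𝔞} {𝔠 : Ideal (𝓞 F)}
    (hc : HasLevel ζ 𝔠) (hmax : ∀ 𝔤, HasLevel ζ 𝔤 → 𝔤 ≤ 𝔠) (𝔤 : Ideal (𝓞 F)) :
    IsPrimitiveChar ζ 𝔤 ↔ 𝔤 = 𝔠 := by
  constructor
  · rintro ⟨h1, h2⟩
    have hle := hmax 𝔤 h1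
    by_contra hne
    exact h2 𝔠 (lt_of_le_of_ne hle hne) hc
  · rintro rfl
    exact ⟨hc, fun 𝔤' hlt hl => absurd (hmax 𝔤' hl) hlt.not_ge⟩

/-- Key ideal-arithmetic lemma. -/
lemma key_arith (𝔠 𝔤₀ 𝔭 : Ideal (𝓞 F)) (h𝔤₀ : 𝔤₀ ≠ 0) (hp : Prime 𝔭)
    (hle : 𝔭 * 𝔤₀ ≤ 𝔠) :
    (∀ 𝔤', 𝔤₀ < 𝔤' → ¬ (𝔭 * 𝔤' ≤ 𝔠)) ↔ (𝔠 = 𝔭 * 𝔤₀ ∨ (¬ 𝔭 ∣ 𝔤₀ ∧ 𝔠 = 𝔤₀)) := by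
  have hp0 : 𝔭 ≠ 0 := hp.ne_zero
  have hpg0 : 𝔭 * 𝔤₀ ≠ 0 := mul_ne_zero hp0 h𝔤₀
  constructor
  · intro P
    obtain ⟨𝔡, h𝔡⟩ : 𝔠 ∣ 𝔭 * 𝔤₀ := Ideal.dvd_iff_le.2 hle
    have hc0 : 𝔠 ≠ 0 := fun h => hpg0 (by rw [h𝔡, h, zero_mul])
    by_cases hd1 : IsUnit 𝔡
    · left
      rw [Ideal.isUnit_iff] at hd1
      rw [h𝔡, hd1, Ideal.mul_top]
    · -- 𝔭 ∣ 𝔡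
      have hpd : 𝔭 ∣ 𝔡 := by
        by_contra hpd
        have : 𝔭 ∣ 𝔠 * 𝔡 := ⟨𝔤₀, h𝔡.symm⟩
        rcases hp.dvd_mul.1 this with hpc | h
        · obtain ⟨𝔠', rfl⟩ := hpc
          have hg : 𝔤₀ = 𝔠' * 𝔡 := by
            apply mul_left_cancel₀ hp0
            rw [h𝔡, mul_assoc]
          have hc'0 : 𝔠' ≠ 0 := fun h => hc0 (by rw [h, mul_zero])
          have hlt : 𝔤₀ < 𝔠' := by
            refine lt_of_le_of_ne (Ideal.dvd_iff_le.1 ⟨𝔡, hg⟩) fun he => ?_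
            have : 𝔠' * 𝔡 = 𝔠' * 1 := by rw [mul_one, ← hg, he]
            exact hd1 (mul_left_cancel₀ hc'0 this ▸ isUnit_one)
          exact P 𝔠' hlt le_rfl
        · exact hpd h
      obtain ⟨𝔢, rfl⟩ := hpd
      have hg : 𝔤₀ = 𝔠 * 𝔢 := by
        apply mul_left_cancel₀ hp0
        rw [h𝔡]; ring
      have he1 : IsUnit 𝔢 := by
        by_contra he1
        have hlt : 𝔤₀ < 𝔠 := by
          refine lt_of_le_of_ne (Ideal.dvd_iff_le.1 ⟨𝔢, hg⟩) fun he => ?_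
          have : 𝔠 * 𝔢 = 𝔠 * 1 := by rw [mul_one, ← hg, he]
          exact he1 (mul_left_cancel₀ hc0 this ▸ isUnit_one)
        exact P 𝔠 hlt (Ideal.dvd_iff_le.1 ⟨𝔭, mul_comm 𝔭 𝔠⟩)
      rw [Ideal.isUnit_iff] at he1
      have hcg : 𝔠 = 𝔤₀ := by rw [hg, he1, Ideal.mul_top]
      right
      refine ⟨fun hdvd => ?_, hcg⟩
      obtain ⟨𝔨, h𝔨⟩ := hdvd
      have h𝔨0 : 𝔨 ≠ 0 := fun h => h𝔤₀ (by rw [h𝔨, h, mul_zero])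
      have hlt : 𝔤₀ < 𝔨 := by
        refine lt_of_le_of_ne (Ideal.dvd_iff_le.1 ⟨𝔭, by rw [h𝔨, mul_comm]⟩) fun he => ?_
        have : 𝔭 * 𝔨 = 1 * 𝔨 := by rw [one_mul, ← h𝔨, he]
        exact hp.not_unit (mul_right_cancel₀ h𝔨0 this ▸ isUnit_one)
      exact P 𝔨 hlt (by rw [← h𝔨, hcg])
  · rintro (hceq | ⟨hnd, hceq⟩) 𝔤' hlt hle' <;> rw [hceq] at hle'
    · have : 𝔤₀ ∣ 𝔤' := by
        have h1 : 𝔭 * 𝔤₀ ∣ 𝔭 * 𝔤' := Ideal.dvd_iff_le.2 hle'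
        obtain ⟨c, hc⟩ := h1
        exact ⟨c, mul_left_cancel₀ hp0 (by rw [hc, mul_assoc])⟩
      exact absurd (Ideal.dvd_iff_le.1 this) hlt.not_ge
    · obtain ⟨𝔥, h𝔥⟩ : 𝔤' ∣ 𝔤₀ := Ideal.dvd_iff_le.2 hlt.le
      have hg'0 : 𝔤' ≠ 0 := fun h => h𝔤₀ (by rw [h𝔥, h, zero_mul])
      have hh1 : ¬ IsUnit 𝔥 := by
        intro hh
        rw [Ideal.isUnit_iff] at hh
        exact hlt.ne (by rw [h𝔥, hh, Ideal.mul_top])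
      have hdvd : 𝔥 ∣ 𝔭 := by
        have h1 : 𝔤₀ ∣ 𝔭 * 𝔤' := Ideal.dvd_iff_le.2 hle'
        obtain ⟨c, hc⟩ := h1
        refine ⟨c, mul_right_cancel₀ hg'0 ?_⟩
        rw [mul_comm 𝔭 𝔤'] at hc
        rw [mul_comm 𝔭, hc, h𝔥]; ring
      obtain ⟨k, hk⟩ := hdvd
      rcases hp.irreducible.isUnit_or_isUnit hk with h | h
      · exact hh1 h
      · rw [Ideal.isUnit_iff] at h
        have : 𝔥 = 𝔭 := by rw [hk, h, Ideal.mul_top]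
        exact hnd ⟨𝔤', by rw [h𝔥, this, mul_comm]⟩

end Aux

/-- Let `𝔞` be a nonzero fractional ideal of a totally real number field `F`, `𝔤₀` a
nonzero integral ideal, `𝔭` a nonzero prime ideal, `𝔤₁ = 𝔭𝔤₀`, and `ζ` a character of `𝔞`
of level `𝔤₁`. Then the restriction of `ζ` to `𝔭𝔞` is primitive of level `𝔤₀` if and only
if either (a) `ζ` is primitive of level `𝔤₁`, or (b) `𝔭 ∤ 𝔤₀` and `ζ` is primitive of
level `𝔤₀`; moreover (a) and (b) are mutually exclusive, and if `𝔭 ∣ 𝔤₀` only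
alternative (a) can occur. -/
theorem restrict_primitive_iff
    (htotreal : Fintype.card (F →+* ℝ) = Module.finrank ℚ F)
    (𝔞 : FracIdl F) (h𝔞 : 𝔞 ≠ 0)
    (𝔤₀ : Ideal (𝓞 F)) (h𝔤₀ : 𝔤₀ ≠ 0)
    (𝔭 : Ideal (𝓞 F)) (hprime : 𝔭.IsPrime) (h𝔭 : 𝔭 ≠ ⊥)
    (ζ : IdealChar F 𝔞) (hlevel : HasLevel ζ (𝔭 * 𝔤₀)) :
    (IsPrimitiveChar (restrictChar 𝔭 ζ) 𝔤₀ ↔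
        (IsPrimitiveChar ζ (𝔭 * 𝔤₀) ∨ (¬ 𝔭 ∣ 𝔤₀ ∧ IsPrimitiveChar ζ 𝔤₀))) ∧
    ¬ (IsPrimitiveChar ζ (𝔭 * 𝔤₀) ∧ (¬ 𝔭 ∣ 𝔤₀ ∧ IsPrimitiveChar ζ 𝔤₀)) ∧
    (𝔭 ∣ 𝔤₀ → IsPrimitiveChar (restrictChar 𝔭 ζ) 𝔤₀ → IsPrimitiveChar ζ (𝔭 * 𝔤₀)) := by
  obtain ⟨𝔠, hc, hge, hmax⟩ := exists_conductor hlevel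
  have hprim : ∀ 𝔤, IsPrimitiveChar ζ 𝔤 ↔ 𝔤 = 𝔠 := isPrimitive_iff_eq_conductor hc hmax
  have hP : Prime 𝔭 := Ideal.prime_of_isPrime h𝔭 hprime
  have hlev : ∀ 𝔤, HasLevel ζ 𝔤 ↔ 𝔤 ≤ 𝔠 := fun 𝔤 => ⟨hmax 𝔤, fun h => hasLevel_mono h hc⟩
  have hRprim : IsPrimitiveChar (restrictChar 𝔭 ζ) 𝔤₀ ↔
      (𝔭 * 𝔤₀ ≤ 𝔠 ∧ ∀ 𝔤', 𝔤₀ < 𝔤' → ¬ (𝔭 * 𝔤' ≤ 𝔠)) := by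
    constructor
    · rintro ⟨h1, h2⟩
      exact ⟨(hlev _).1 ((hasLevel_restrict_iff _ _ _).1 h1),
        fun 𝔤' hlt hle' =>
          h2 𝔤' hlt ((hasLevel_restrict_iff _ _ _).2 ((hlev _).2 hle'))⟩
    · rintro ⟨h1, h2⟩
      exact ⟨(hasLevel_restrict_iff _ _ _).2 ((hlev _).2 h1),
        fun 𝔤' hlt hl => h2 𝔤' hlt ((hlev _).1 ((hasLevel_restrict_iff _ _ _).1 hl))⟩
  have hkey := key_arith 𝔠 𝔤₀ 𝔭 h𝔤₀ hP hge
  have iff1 : IsPrimitiveChar (restrictChar 𝔭 ζ) 𝔤₀ ↔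
      (IsPrimitiveChar ζ (𝔭 * 𝔤₀) ∨ (¬ 𝔭 ∣ 𝔤₀ ∧ IsPrimitiveChar ζ 𝔤₀)) := by
    rw [hRprim, hprim (𝔭 * 𝔤₀), hprim 𝔤₀]
    constructor
    · rintro ⟨h1, h2⟩
      rcases hkey.1 h2 with h | ⟨h, h'⟩
      · exact Or.inl h.symm
      · exact Or.inr ⟨h, h'.symm⟩
    · rintro (h | ⟨h, h'⟩)
      · exact ⟨hge, hkey.2 (Or.inl h.symm)⟩
      · exact ⟨hge, hkey.2 (Or.inr ⟨h, h'.symm⟩)⟩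
  refine ⟨iff1, ?_, ?_⟩
  · rintro ⟨ha, -, hb⟩
    have h1 : 𝔭 * 𝔤₀ = 𝔠 := (hprim _).1 ha
    have h2 : 𝔤₀ = 𝔠 := (hprim _).1 hb
    have : 𝔭 * 𝔤₀ = 1 * 𝔤₀ := by rw [one_mul, h1, h2]
    exact hP.not_unit (mul_right_cancel₀ h𝔤₀ this ▸ isUnit_one)
  · intro hd hR
    rcases iff1.1 hR with h | ⟨h, -⟩
    · exact h
    · exact absurd hd h
end
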